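/- Let σ be a relational vocabulary, 𝒜 and ℬ finite σ-structures, and k ≥ 1. The following are equivalent: (1) there exist I-morphisms f : E_k 𝒜 → ℬ and g : E_k ℬ → 𝒜 with g ∘ f* = ε_𝒜 and f ∘ g* = ε_ℬ (i.e., 𝒜 and ℬ are isomorphic in the coKleisli category via I-morphisms); (2) Duplicator has a winning strategy in the k-round bijection game from 𝒜 to ℬ, i.e., there is a family of bijections ψ_s : A → B, indexed by the sequences s over A of length < k (including the empty sequence), such that for every [a_1,…,a_j] with j ≤ k, the relation {(a_i, b_i) : 1 ≤ i ≤ j}, where b_i = ψ_{[a_1,…,a_{i−1}]}(a_i), is a partial isomorphism from 𝒜 to ℬ. -/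

import Mathlib

/-- A relational vocabulary: a type of relation symbols with arities. -/
structure RelVocab : Type 1 where
  Rel : Type
  ar : Rel → ℕ

/-- A structure for a relational vocabulary. -/
structure RelStruct (σ : RelVocab) : Type 1 where
  carrier : Type
  rel : ∀ R : σ.Rel, (Fin (σ.ar R) → carrier) → Prop

/-- Homomorphisms of relational structures. -/
def IsHom {σ : RelVocab} (𝒜 ℬ : RelStruct σ) (h : 𝒜.carrier → ℬ.carrier) : Prop :=
  ∀ (R : σ.Rel) (v : Fin (σ.ar R) → 𝒜.carrier), 𝒜.rel R v → ℬ.rel R (fun i => h (v i))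

/-- Nonempty sequences over `A` of length at most `k`: the universe of `E_k 𝒜`. -/
def EkC (k : ℕ) (A : Type) : Type :=
  {l : List A // l ≠ [] ∧ l.length ≤ k}

/-- The counit: the last element of a sequence. -/
def eps {k : ℕ} {A : Type} (s : EkC k A) : A :=
  s.1.getLast s.2.1

/-- Comparability in the prefix order. -/
def Cmp {A : Type} (s t : List A) : Prop :=
  s <+: t ∨ t <+: s

/-- The Ehrenfeucht–Fraïssé comonad `E_k` on structures. -/
def Ek {σ : RelVocab} (k : ℕ) (𝒜 : RelStruct σ) : RelStruct σ where
  carrier := EkC k 𝒜.carrier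
  rel R v := (∀ i j, Cmp (v i).1 (v j).1) ∧ 𝒜.rel R (fun i => eps (v i))

/-- The prefix of `s` of length `i+1`. -/
def prefAt {k : ℕ} {A : Type} (s : EkC k A) (i : Fin s.1.length) : EkC k A :=
  ⟨s.1.take (i + 1), by
    constructor
    · apply List.ne_nil_of_length_pos
      rw [List.length_take]
      exact lt_min (Nat.succ_pos _) (Nat.lt_of_le_of_lt (Nat.zero_le _) i.2)
    · rw [List.length_take]
      exact le_trans (min_le_right _ _) s.2.2⟩

/-- The Kleisli coextension `f* [a_1,…,a_j] = [f[a_1],…,f[a_1,…,a_j]]`. -/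
def coext {k : ℕ} {A B : Type} (f : EkC k A → B) (s : EkC k A) : EkC k B :=
  ⟨List.ofFn (fun i : Fin s.1.length => f (prefAt s i)), by
    constructor
    · apply List.ne_nil_of_length_pos
      rw [List.length_ofFn]
      exact List.length_pos_iff.mpr s.2.1
    · rw [List.length_ofFn]
      exact s.2.2⟩

/-- A partial homomorphism from `𝒜` to `ℬ`: a finite relation, single-valued on its
domain, preserving all relations where defined. -/
def IsPHom {σ : RelVocab} (𝒜 ℬ : RelStruct σ) (r : Set (𝒜.carrier × ℬ.carrier)) : Prop :=
  r.Finite ∧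
  (∀ a b b', (a, b) ∈ r → (a, b') ∈ r → b = b') ∧
  (∀ (R : σ.Rel) (v : Fin (σ.ar R) → 𝒜.carrier) (w : Fin (σ.ar R) → ℬ.carrier),
    (∀ i, (v i, w i) ∈ r) → 𝒜.rel R v → ℬ.rel R w)

/-- The converse of a relation. -/
def conv {A B : Type} (r : Set (A × B)) : Set (B × A) :=
  {q | (q.2, q.1) ∈ r}

/-- A partial isomorphism: a partial homomorphism whose converse is a partial
homomorphism. -/
def IsPIso {σ : RelVocab} (𝒜 ℬ : RelStruct σ) (r : Set (𝒜.carrier × ℬ.carrier)) : Prop :=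
  IsPHom 𝒜 ℬ r ∧ IsPHom ℬ 𝒜 (conv r)

/-- The I-morphism condition for a coKleisli morphism `E_k 𝒜 → ℬ`. -/
def IMor {k : ℕ} {A B : Type} (f : EkC k A → B) : Prop :=
  ∀ s t : EkC k A, s.1 <+: t.1 → eps s = eps t → f s = f t


namespace Stmt7Aux

variable {k : ℕ} {A B : Type}

lemma take_ne_nil (l : List A) (i : ℕ) (hi : i < l.length) : l.take (i+1) ≠ [] := by
  apply List.ne_nil_of_length_pos; rw [List.length_take]; omega

/-- prefix of length `i+1` as an element of `EkC k A`. -/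
def pre (l : List A) (hl : l.length ≤ k) {i : ℕ} (hi : i < l.length) : EkC k A :=
  ⟨l.take (i+1), take_ne_nil l i hi, by rw [List.length_take]; omega⟩

lemma getLast_take (l : List A) {i : ℕ} (hi : i < l.length) (h : l.take (i+1) ≠ []) :
    (l.take (i+1)).getLast h = l[i] := by
  rw [List.getLast_eq_getElem]
  have h1 : (l.take (i+1)).length - 1 = i := by rw [List.length_take]; omega
  simp only [List.getElem_take, h1]

lemma eps_pre (l : List A) (hl : l.length ≤ k) {i : ℕ} (hi : i < l.length) :
    eps (pre l hl hi) = l[i] := getLast_take l hi _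

lemma take_prefix_take (l : List A) {m n : ℕ} (h : m ≤ n) : l.take m <+: l.take n :=
  List.prefix_take_iff.mpr ⟨List.take_prefix _ _, by rw [List.length_take]; omega⟩

lemma eps_eq_getElem (s : EkC k A) : eps s = s.1[s.1.length - 1]'(by
    have := List.length_pos_iff.mpr s.2.1; omega) := by
  rw [eps, List.getLast_eq_getElem]

lemma length_pos (s : EkC k A) : 0 < s.1.length := List.length_pos_iff.mpr s.2.1

lemma prefix_eq_take {s t : EkC k A} (h : s.1 <+: t.1) :
    s.1 = t.1.take s.1.length := List.prefix_iff_eq_take.mp h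

/-- `coext` in terms of `pre`. -/
lemma coext_length (f : EkC k A → B) (s : EkC k A) :
    (coext f s).1.length = s.1.length := by simp [coext]

lemma coext_getElem (f : EkC k A → B) (s : EkC k A) {i : ℕ} (hi : i < s.1.length) :
    (coext f s).1[i]'(by rw [coext_length]; exact hi) = f (pre s.1 s.2.2 hi) := by
  simp only [coext, List.getElem_ofFn]
  rfl

end Stmt7Aux

namespace Stmt7Aux
variable {k : ℕ} {A B : Type}

/-- list version of `coext`. -/
def ctr (f : EkC k A → B) (l : List A) (hl : l.length ≤ k) : List B :=
  List.ofFn fun i : Fin l.length => f (pre l hl i.2)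

lemma ctr_length (f : EkC k A → B) (l : List A) (hl : l.length ≤ k) :
    (ctr f l hl).length = l.length := by simp [ctr]

lemma ctr_getElem (f : EkC k A → B) (l : List A) (hl : l.length ≤ k) {i : ℕ}
    (hi : i < l.length) :
    (ctr f l hl)[i]'(by rw [ctr_length]; exact hi) = f (pre l hl hi) := by
  simp only [ctr, List.getElem_ofFn]

lemma ctr_coext (f : EkC k A → B) (s : EkC k A) :
    (coext f s).1 = ctr f s.1 s.2.2 := by
  apply List.ext_getElem (by rw [coext_length, ctr_length])
  intro i h1 h2
  rw [coext_getElem f s (by rwa [coext_length] at h1), ctr_getElem]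

lemma ctr_take (f : EkC k A → B) (l : List A) (hl : l.length ≤ k) {m : ℕ} (hm : m ≤ l.length) :
    ctr f (l.take m) (by rw [List.length_take]; omega) = (ctr f l hl).take m := by
  apply List.ext_getElem
  · rw [ctr_length, List.length_take, List.length_take, ctr_length]
  · intro i h1 h2
    rw [ctr_length] at h1
    have h1' := h1
    rw [List.length_take] at h1'
    rw [ctr_getElem f _ _ h1, List.getElem_take, ctr_getElem f l hl (by omega)]
    congr 1
    apply Subtype.ext
    show (l.take m).take (i+1) = l.take (i+1)
    rw [List.take_take]
    congr 1
    omega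

lemma ctr_append (f : EkC k A → B) (l : List A) (a : A) (h' : (l ++ [a]).length ≤ k)
    (hl : l.length ≤ k) :
    ctr f (l ++ [a]) h' = ctr f l hl ++
      [f ⟨l ++ [a], by simp, h'⟩] := by
  apply List.ext_getElem
  · simp [ctr_length]
  · intro i h1 h2
    rw [ctr_length, List.length_append, List.length_singleton] at h1
    rcases Nat.lt_or_ge i l.length with hi | hi
    · rw [ctr_getElem f _ _ (by simpa using h1)]
      rw [List.getElem_append_left (by rwa [ctr_length])]
      rw [ctr_getElem f _ _ hi]
      congr 1
      apply Subtype.ext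
      show (l ++ [a]).take (i+1) = l.take (i+1)
      rw [List.take_append, Nat.sub_eq_zero_of_le (by omega), List.take_zero, List.append_nil]
    · have hi' : i = l.length := by omega
      subst hi'
      rw [ctr_getElem f _ _ (by simp)]
      rw [List.getElem_concat_length (by rw [ctr_length])]
      congr 1
      apply Subtype.ext
      show (l ++ [a]).take (l.length+1) = l ++ [a]
      rw [List.take_of_length_le (by simp)]

end Stmt7Aux

namespace Stmt7Aux
variable {k : ℕ} {A B : Type}

def snoc (l : List A) (hl : l.length < k) (a : A) : EkC k A :=
  ⟨l ++ [a], by simp, by rw [List.length_append, List.length_singleton]; omega⟩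

lemma eps_snoc (l : List A) (hl : l.length < k) (a : A) : eps (snoc l hl a) = a :=
  List.getLast_concat

lemma coext_snoc (f : EkC k A → B) (l : List A) (hl : l.length < k) (a : A) :
    coext f (snoc l hl a) =
      snoc (ctr f l hl.le) (by rw [ctr_length]; exact hl) (f (snoc l hl a)) := by
  apply Subtype.ext
  rw [show (coext f (snoc l hl a)).1 = ctr f (l ++ [a]) (snoc l hl a).2.2 from
    ctr_coext f (snoc l hl a)]
  exact ctr_append f l a _ hl.le

end Stmt7Aux

namespace Stmt7Aux
variable {k : ℕ} {A B : Type}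

lemma gf_snoc {f : EkC k A → B} {g : EkC k B → A}
    (hgf : ∀ s, g (coext f s) = eps s) (l : List A) (hl : l.length < k) (a : A) :
    g (snoc (ctr f l hl.le) (by rw [ctr_length]; exact hl) (f (snoc l hl a))) = a := by
  have h := hgf (snoc l hl a)
  rw [coext_snoc, eps_snoc] at h
  exact h

/-- The bijection used in the forward direction. -/
noncomputable def Ψ (hk : 1 ≤ k) (f : EkC k A → B) (g : EkC k B → A)
    (hgf : ∀ s, g (coext f s) = eps s) (hfg : ∀ t, f (coext g t) = eps t)
    (l : List A) : A ≃ B := by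
  have hl : (l.take (k-1)).length < k := by rw [List.length_take]; omega
  have hm : (ctr f (l.take (k-1)) hl.le).length < k := by rw [ctr_length]; exact hl
  refine ⟨fun a => f (snoc (l.take (k-1)) hl a),
          fun b => g (snoc (ctr f (l.take (k-1)) hl.le) hm b), ?_, ?_⟩
  · intro a
    exact gf_snoc hgf _ hl a
  · intro b
    set l' := l.take (k-1)
    set m := ctr f l' hl.le with hmdef
    set φ : B → A := fun b => g (snoc m hm b) with hφ
    set ψ : A → B := fun a => f (snoc l' hl a) with hψ
    have hn : (ctr g m hm.le).length < k := by rw [ctr_length]; exact hm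
    have hχφ : ∀ b, f (snoc (ctr g m hm.le) hn (g (snoc m hm b))) = b := fun b =>
      gf_snoc hfg m hm b
    have h1 : φ (ψ (φ b)) = φ b := gf_snoc hgf l' hl (φ b)
    have h2 := congrArg (fun x => f (snoc (ctr g m hm.le) hn x)) h1
    simpa only [hφ, hχφ] using h2

lemma Ψ_apply (hk : 1 ≤ k) (f : EkC k A → B) (g : EkC k B → A)
    (hgf : ∀ s, g (coext f s) = eps s) (hfg : ∀ t, f (coext g t) = eps t)
    (l : List A) (hl : l.length ≤ k) {i : ℕ} (hi : i < l.length) :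
    Ψ hk f g hgf hfg (l.take i) (l[i]) = f (pre l hl hi) := by
  have hik : i ≤ k - 1 := by omega
  show f (snoc ((l.take i).take (k-1)) _ (l[i])) = f (pre l hl hi)
  congr 1
  apply Subtype.ext
  show (l.take i).take (k-1) ++ [l[i]] = l.take (i+1)
  rw [List.take_take, min_eq_right hik, ← List.concat_eq_append, List.take_concat_get]

end Stmt7Aux

namespace Stmt7Aux

lemma forward {σ : RelVocab} {𝒜 ℬ : RelStruct σ} {k : ℕ} (hk : 1 ≤ k)
    (f : EkC k 𝒜.carrier → ℬ.carrier) (g : EkC k ℬ.carrier → 𝒜.carrier)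
    (hf : IsHom (Ek k 𝒜) ℬ f) (hg : IsHom (Ek k ℬ) 𝒜 g) (hIf : IMor f) (hIg : IMor g)
    (hgf : ∀ s, g (coext f s) = eps s) (hfg : ∀ t, f (coext g t) = eps t)
    (l : List 𝒜.carrier) (hl : l.length ≤ k) :
    IsPIso 𝒜 ℬ {p | ∃ i : Fin l.length,
      p = (l.get i, Ψ hk f g hgf hfg (l.take i) (l.get i))} := by
  set r := {p | ∃ i : Fin l.length,
      p = (l.get i, Ψ hk f g hgf hfg (l.take i) (l.get i))} with hrdef
  have hmem : ∀ p, p ∈ r ↔ ∃ i : Fin l.length, p = (l[(i:ℕ)], f (pre l hl i.2)) := by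
    intro p
    simp only [hrdef, Set.mem_setOf_eq, List.get_eq_getElem,
      Ψ_apply hk f g hgf hfg l hl]
  -- M = the translated play
  set M := ctr f l hl with hMdef
  have hM : M.length ≤ k := by rw [hMdef, ctr_length]; exact hl
  have hMl : M.length = l.length := by rw [hMdef, ctr_length]
  -- key : g recovers l from M
  have hMget : ∀ (i : ℕ) (hi : i < l.length),
      M[i]'(by rw [hMl]; exact hi) = f (pre l hl hi) := fun i hi => ctr_getElem f l hl hi
  have hrec : ∀ (i : ℕ) (hi : i < l.length),
      g (pre M hM (by rw [hMl]; exact hi)) = l[i] := by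
    intro i hi
    have h1 : pre M hM (show i < M.length by rw [hMl]; exact hi) =
        coext f (pre l hl hi) := by
      apply Subtype.ext
      rw [ctr_coext]
      show M.take (i+1) = ctr f (l.take (i+1)) _
      rw [hMdef, ctr_take f l hl (by omega)]
    rw [h1, hgf, eps_pre]
  -- single-valued core for f
  have hsvf : ∀ (i j : Fin l.length), (i:ℕ) ≤ j → l[(i:ℕ)] = l[(j:ℕ)] →
      f (pre l hl i.2) = f (pre l hl j.2) := by
    intro i j hij hij'
    apply hIf
    · exact take_prefix_take l (by omega)
    · rw [eps_pre, eps_pre]; exact hij'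
  -- single-valued core for g
  have hsvg : ∀ (i j : Fin l.length), (i:ℕ) ≤ j →
      f (pre l hl i.2) = f (pre l hl j.2) → l[(i:ℕ)] = l[(j:ℕ)] := by
    intro i j hij hfij
    rw [← hrec i i.2, ← hrec j j.2]
    apply hIg
    · exact take_prefix_take M (by omega)
    · rw [eps_pre M hM, eps_pre M hM]
      exact (hMget _ i.2).trans (hfij.trans (hMget _ j.2).symm)
  constructor
  · refine ⟨?_, ?_, ?_⟩
    · apply Set.Finite.subset (Set.finite_range
        (fun i : Fin l.length => (l.get i, Ψ hk f g hgf hfg (l.take i) (l.get i))))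
      rintro p ⟨i, hp⟩
      exact ⟨i, hp.symm⟩
    · intro a b b' hab hab'
      obtain ⟨i, hi⟩ := (hmem _).mp hab
      obtain ⟨j, hj⟩ := (hmem _).mp hab'
      obtain ⟨ha, hb⟩ := Prod.mk.injEq .. ▸ hi
      obtain ⟨ha', hb'⟩ := Prod.mk.injEq .. ▸ hj
      subst hb hb'
      rcases Nat.le_total (i:ℕ) (j:ℕ) with hij | hij
      · exact hsvf i j hij (ha ▸ ha' ▸ rfl)
      · exact (hsvf j i hij (ha' ▸ ha ▸ rfl)).symm
    · intro R v w hvw hv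
      choose idx hidx using fun m => (hmem _).mp (hvw m)
      have hvm : ∀ m, v m = l[(idx m : ℕ)] := fun m => (Prod.mk.injEq .. ▸ hidx m).1
      have hwm : ∀ m, w m = f (pre l hl (idx m).2) := fun m => (Prod.mk.injEq .. ▸ hidx m).2
      have := hf R (fun m => pre l hl (idx m).2) ⟨?_, ?_⟩
      · convert this using 2 with m
        exact hwm m
      · intro m m'
        rcases Nat.le_total (idx m : ℕ) (idx m' : ℕ) with h | h
        · exact Or.inl (take_prefix_take l (by omega))
        · exact Or.inr (take_prefix_take l (by omega))
      · convert hv using 2 with m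
        rw [eps_pre, ← hvm m]
  · refine ⟨?_, ?_, ?_⟩
    · apply Set.Finite.subset (Set.Finite.image Prod.swap (Set.finite_range
        (fun i : Fin l.length => (l.get i, Ψ hk f g hgf hfg (l.take i) (l.get i)))))
      rintro ⟨b, a⟩ ⟨i, hp⟩
      exact ⟨(a, b), ⟨i, hp.symm⟩, rfl⟩
    · intro b a a' hba hba'
      obtain ⟨i, hi⟩ := (hmem _).mp hba
      obtain ⟨j, hj⟩ := (hmem _).mp hba'
      obtain ⟨ha, hb⟩ := Prod.mk.injEq .. ▸ hi
      obtain ⟨ha', hb'⟩ := Prod.mk.injEq .. ▸ hj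
      subst ha ha'
      rcases Nat.le_total (i:ℕ) (j:ℕ) with hij | hij
      · exact hsvg i j hij (hb ▸ hb' ▸ rfl)
      · exact (hsvg j i hij (hb' ▸ hb ▸ rfl)).symm
    · intro R v w hvw hv
      choose idx hidx using fun m => (hmem _).mp (hvw m)
      have hwm : ∀ m, w m = l[(idx m : ℕ)] := fun m => (Prod.mk.injEq .. ▸ hidx m).1
      have hvm : ∀ m, v m = f (pre l hl (idx m).2) := fun m => (Prod.mk.injEq .. ▸ hidx m).2
      have := hg R (fun m => pre M hM (by rw [hMl]; exact (idx m).2)) ⟨?_, ?_⟩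
      · convert this using 2 with m
        rw [hrec _ (idx m).2, ← hwm m]
      · intro m m'
        rcases Nat.le_total (idx m : ℕ) (idx m' : ℕ) with h | h
        · exact Or.inl (take_prefix_take M (by omega))
        · exact Or.inr (take_prefix_take M (by omega))
      · convert hv using 2 with m
        rw [eps_pre M hM]
        exact (hMget _ (idx m).2).trans (hvm m).symm

end Stmt7Aux

namespace Stmt7Aux
variable {k : ℕ} {A B : Type}

/-- Forward translation of plays. -/
def trA (ψ : List A → A ≃ B) (l : List A) : List B :=
  List.ofFn (fun i : Fin l.length => ψ (l.take i) l[(i:ℕ)])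

/-- Backward translation, on reversed input. -/
def trBAux (ψ : List A → A ≃ B) : List B → List A
  | [] => []
  | b :: m => trBAux ψ m ++ [(ψ (trBAux ψ m)).symm b]

/-- Backward translation of plays. -/
def trB (ψ : List A → A ≃ B) (m : List B) : List A := trBAux ψ m.reverse

variable (ψ : List A → A ≃ B)

@[simp] lemma trA_length (l : List A) : (trA ψ l).length = l.length := by simp [trA]

lemma trA_getElem (l : List A) {i : ℕ} (hi : i < l.length) :
    (trA ψ l)[i]'(by rw [trA_length]; exact hi) = ψ (l.take i) l[i] := by
  simp only [trA, List.getElem_ofFn]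

lemma trA_append (l : List A) (a : A) :
    trA ψ (l ++ [a]) = trA ψ l ++ [ψ l a] := by
  apply List.ext_getElem (by simp)
  intro i h1 h2
  have h1' : i < (l ++ [a]).length := by rwa [trA_length] at h1
  rcases Nat.lt_or_ge i l.length with hi | hi
  · have e1 : (trA ψ (l ++ [a]))[i]'h1 =
        ψ ((l ++ [a]).take i) ((l ++ [a])[i]'h1') := trA_getElem ψ (l ++ [a]) h1'
    have e2 : (trA ψ l ++ [ψ l a])[i]'h2 = (trA ψ l)[i]'(by rwa [trA_length]) :=
      List.getElem_append_left (by rwa [trA_length])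
    have e3 : (trA ψ l)[i]'(by rwa [trA_length]) = ψ (l.take i) (l[i]'hi) :=
      trA_getElem ψ l hi
    have e4 : (l ++ [a]).take i = l.take i := by
      rw [List.take_append, Nat.sub_eq_zero_of_le (by omega),
        List.take_zero, List.append_nil]
    have e5 : (l ++ [a])[i]'h1' = l[i]'hi := List.getElem_append_left hi
    rw [e1, e2, e3, e4, e5]
  · have hi' : i = l.length := by simp at h1'; omega
    subst hi'
    have e1 : (trA ψ (l ++ [a]))[l.length]'h1 =
        ψ ((l ++ [a]).take l.length) ((l ++ [a])[l.length]'h1') :=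
      trA_getElem ψ (l ++ [a]) h1'
    have e2 : (trA ψ l ++ [ψ l a])[l.length]'h2 = ψ l a :=
      List.getElem_concat_length (by rw [trA_length]) _
    have e3 : (l ++ [a]).take l.length = l := List.take_left ..
    have e4 : (l ++ [a])[l.length]'h1' = a := List.getElem_concat_length rfl _
    rw [e1, e2, e3, e4]

lemma trA_take (l : List A) (m : ℕ) :
    trA ψ (l.take m) = (trA ψ l).take m := by
  apply List.ext_getElem (by simp [List.length_take])
  intro i h1 h2
  have h1' : i < (l.take m).length := by rwa [trA_length] at h1
  have hi : i < l.length := by rw [List.length_take] at h1'; omega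
  have e1 : (trA ψ (l.take m))[i]'h1 =
      ψ ((l.take m).take i) ((l.take m)[i]'h1') := trA_getElem ψ (l.take m) h1'
  have e2 : ((trA ψ l).take m)[i]'h2 = (trA ψ l)[i]'(by rw [trA_length]; exact hi) :=
    List.getElem_take
  have e3 : (trA ψ l)[i]'(by rw [trA_length]; exact hi) = ψ (l.take i) (l[i]'hi) :=
    trA_getElem ψ l hi
  have e4 : (l.take m).take i = l.take i := by
    rw [List.take_take]
    congr 1
    rw [List.length_take] at h1'
    omega
  have e5 : (l.take m)[i]'h1' = l[i]'hi := List.getElem_take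
  rw [e1, e2, e3, e4, e5]

@[simp] lemma trB_nil : trB ψ ([] : List B) = [] := rfl

lemma trB_append (m : List B) (b : B) :
    trB ψ (m ++ [b]) = trB ψ m ++ [(ψ (trB ψ m)).symm b] := by
  rw [trB, List.reverse_concat]
  rfl

@[simp] lemma trB_length (m : List B) : (trB ψ m).length = m.length := by
  induction m using List.reverseRecOn with
  | nil => rfl
  | append_singleton m b ih => rw [trB_append]; simp [ih]

lemma trB_trA (l : List A) : trB ψ (trA ψ l) = l := by
  induction l using List.reverseRecOn with
  | nil => rfl
  | append_singleton l a ih => rw [trA_append, trB_append, ih, Equiv.symm_apply_apply]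

lemma trA_trB (m : List B) : trA ψ (trB ψ m) = m := by
  induction m using List.reverseRecOn with
  | nil => rfl
  | append_singleton m b ih => rw [trB_append, trA_append, ih, Equiv.apply_symm_apply]

lemma trB_take (m : List B) (j : ℕ) :
    trB ψ (m.take j) = (trB ψ m).take j := by
  conv_lhs => rw [← trA_trB ψ m]
  rw [← trA_take, trB_trA, ← trA_trB ψ m, trB_trA]

lemma getLast_congr {l l' : List A} (h1 : l ≠ []) (h : l = l') :
    l.getLast h1 = l'.getLast (h ▸ h1) := by subst h; rfl

end Stmt7Aux

namespace Stmt7Aux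
variable {k : ℕ} {A B : Type}

lemma getElem_list_congr {l l' : List A} (h : l = l') {i : ℕ} (hi : i < l.length) :
    l[i]'hi = l'[i]'(h ▸ hi) := by subst h; rfl

lemma getElem_idx_congr {l : List A} {i i' : ℕ} (h : i = i') (hi : i < l.length) :
    l[i]'hi = l[i']'(h ▸ hi) := by subst h; rfl

/-- Duplicator's strategy as a coKleisli morphism. -/
def bf (ψ : List A → A ≃ B) (s : EkC k A) : B := ψ s.1.dropLast (eps s)

/-- The inverse strategy as a coKleisli morphism. -/
def bg (ψ : List A → A ≃ B) (t : EkC k B) : A :=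
  (trB ψ t.1).getLast (by
    apply List.ne_nil_of_length_pos
    rw [trB_length]
    exact List.length_pos_iff.mpr t.2.1)

variable (ψ : List A → A ≃ B)

lemma bf_pre (l : List A) (hl : l.length ≤ k) {i : ℕ} (hi : i < l.length) :
    bf ψ (pre l hl hi) = ψ (l.take i) (l[i]'hi) := by
  have len : (l.take (i+1)).length = i + 1 := by rw [List.length_take]; omega
  rw [bf, List.dropLast_eq_take, eps_eq_getElem]
  show ψ ((l.take (i+1)).take ((l.take (i+1)).length - 1))
      ((l.take (i+1))[(l.take (i+1)).length - 1]'_) = _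
  simp only [len, Nat.add_sub_cancel, List.getElem_take, List.take_take,
    min_eq_left (Nat.le_succ i)]

lemma bg_pre (m : List B) (hm : m.length ≤ k) {i : ℕ} (hi : i < m.length) :
    bg ψ (pre m hm hi) = (trB ψ m)[i]'(by rw [trB_length]; exact hi) := by
  have e : trB ψ (m.take (i+1)) = (trB ψ m).take (i+1) := trB_take ψ m (i+1)
  exact (getLast_congr _ e).trans
    (getLast_take (trB ψ m) (by rw [trB_length]; exact hi) _)

lemma hAB (m : List B) {i : ℕ} (hi : i < m.length) :
    ψ ((trB ψ m).take i) ((trB ψ m)[i]'(by rw [trB_length]; exact hi)) = m[i]'hi := by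
  have h1 : m[i]'hi = (trA ψ (trB ψ m))[i]'(by rw [trA_length, trB_length]; exact hi) :=
    getElem_list_congr (trA_trB ψ m).symm hi
  rw [h1, trA_getElem ψ (trB ψ m) (by rw [trB_length]; exact hi)]

end Stmt7Aux

namespace Stmt7Aux

lemma backward {σ : RelVocab} {𝒜 ℬ : RelStruct σ} {k : ℕ}
    (ψ : List 𝒜.carrier → 𝒜.carrier ≃ ℬ.carrier)
    (hψ : ∀ l : List 𝒜.carrier, l.length ≤ k →
      IsPIso 𝒜 ℬ {p | ∃ i : Fin l.length, p = (l.get i, ψ (l.take i) (l.get i))}) :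
    IsHom (Ek k 𝒜) ℬ (bf ψ) ∧ IsHom (Ek k ℬ) 𝒜 (bg ψ) ∧ IMor (bf (k := k) ψ) ∧
    IMor (bg (k := k) ψ) ∧
    (∀ s : EkC k 𝒜.carrier, bg ψ (coext (bf ψ) s) = eps s) ∧
    (∀ t : EkC k ℬ.carrier, bf ψ (coext (bg ψ) t) = eps t) := by
  have hmem : ∀ (l : List 𝒜.carrier) (hl : l.length ≤ k) (i : ℕ) (hi : i < l.length),
      (l[i], ψ (l.take i) (l[i]'hi)) ∈
        {p | ∃ i : Fin l.length, p = (l.get i, ψ (l.take i) (l.get i))} :=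
    fun l hl i hi => ⟨⟨i, hi⟩, rfl⟩
  refine ⟨?_, ?_, ?_, ?_, ?_, ?_⟩
  -- IsHom f
  · rintro R v ⟨hcmp, hrel⟩
    rcases isEmpty_or_nonempty (Fin (σ.ar R)) with hE | hNE
    · exact (hψ [] (by simp)).1.2.2 R (fun i => eps (v i)) (fun i => bf ψ (v i))
        (fun i => isEmptyElim i) hrel
    · obtain ⟨m₀, hm₀⟩ := Finite.exists_max (fun m => (v m).1.length)
      set l := (v m₀).1 with hldef
      have hl : l.length ≤ k := (v m₀).2.2
      have hpref : ∀ m, (v m).1 <+: l := by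
        intro m
        rcases hcmp m m₀ with h | h
        · exact h
        · exact (h.eq_of_length_le (hm₀ m)) ▸ List.prefix_rfl
      have hidx : ∀ m, (v m).1.length - 1 < l.length := fun m =>
        lt_of_lt_of_le (Nat.sub_lt (length_pos _) one_pos) (hpref m).length_le
      have hvm : ∀ m, v m = pre l hl (hidx m) := by
        intro m
        apply Subtype.ext
        show (v m).1 = l.take ((v m).1.length - 1 + 1)
        rw [show (v m).1.length - 1 + 1 = (v m).1.length from Nat.sub_add_cancel (length_pos (v m))]
        exact List.prefix_iff_eq_take.mp (hpref m)
      refine (hψ l hl).1.2.2 R (fun m => eps (v m)) (fun m => bf ψ (v m))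
        (fun m => ?_) hrel
      show (eps (v m), bf ψ (v m)) ∈ _
      rw [hvm m, eps_pre, bf_pre]
      exact hmem l hl _ (hidx m)
  -- IsHom g
  · rintro R v ⟨hcmp, hrel⟩
    rcases isEmpty_or_nonempty (Fin (σ.ar R)) with hE | hNE
    · exact (hψ [] (by simp)).2.2.2 R (fun i => eps (v i)) (fun i => bg ψ (v i))
        (fun i => isEmptyElim i) hrel
    · obtain ⟨m₀, hm₀⟩ := Finite.exists_max (fun m => (v m).1.length)
      set m := (v m₀).1 with hmdef
      have hm : m.length ≤ k := (v m₀).2.2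
      set l := trB ψ m with hltr
      have hl : l.length ≤ k := by rw [hltr, trB_length]; exact hm
      have hpref : ∀ j, (v j).1 <+: m := by
        intro j
        rcases hcmp j m₀ with h | h
        · exact h
        · exact (h.eq_of_length_le (hm₀ j)) ▸ List.prefix_rfl
      have hidx : ∀ j, (v j).1.length - 1 < m.length := fun j =>
        lt_of_lt_of_le (Nat.sub_lt (length_pos _) one_pos) (hpref j).length_le
      have hvm : ∀ j, v j = pre m hm (hidx j) := by
        intro j
        apply Subtype.ext
        show (v j).1 = m.take ((v j).1.length - 1 + 1)
        rw [show (v j).1.length - 1 + 1 = (v j).1.length from Nat.sub_add_cancel (length_pos (v j))]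
        exact List.prefix_iff_eq_take.mp (hpref j)
      refine (hψ l hl).2.2.2 R (fun j => eps (v j)) (fun j => bg ψ (v j))
        (fun j => ?_) hrel
      have key : (bg ψ (v j), eps (v j)) ∈
          {p | ∃ i : Fin l.length, p = (l.get i, ψ (l.take i) (l.get i))} := by
        rw [hvm j, eps_pre, bg_pre, ← hAB ψ m (hidx j)]
        exact hmem l hl _ (by rw [hltr, trB_length]; exact hidx j)
      exact key
  -- IMor f
  · intro s t hst heps
    set l := t.1 with hldef
    have hl : l.length ≤ k := t.2.2
    have hi : s.1.length - 1 < l.length :=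
      lt_of_lt_of_le (Nat.sub_lt (length_pos _) one_pos) hst.length_le
    have hj : l.length - 1 < l.length := Nat.sub_lt (length_pos t) one_pos
    have hs : s = pre l hl hi := by
      apply Subtype.ext
      show s.1 = l.take (s.1.length - 1 + 1)
      rw [Nat.sub_add_cancel (length_pos _)]
      exact List.prefix_iff_eq_take.mp hst
    have ht : t = pre l hl hj := by
      apply Subtype.ext
      show l = l.take (l.length - 1 + 1)
      rw [Nat.sub_add_cancel (length_pos t), List.take_of_length_le le_rfl]
    refine (hψ l hl).1.2.1 (eps s) (bf ψ s) (bf ψ t) ?_ ?_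
    · rw [hs, eps_pre, bf_pre]
      exact hmem l hl _ hi
    · rw [heps, ht, eps_pre, bf_pre]
      exact hmem l hl _ hj
  -- IMor g
  · intro s t hst heps
    set m := t.1 with hmdef
    have hm : m.length ≤ k := t.2.2
    set l := trB ψ m with hltr
    have hl : l.length ≤ k := by rw [hltr, trB_length]; exact hm
    have hi : s.1.length - 1 < m.length :=
      lt_of_lt_of_le (Nat.sub_lt (length_pos _) one_pos) hst.length_le
    have hj : m.length - 1 < m.length := Nat.sub_lt (length_pos t) one_pos
    have hs : s = pre m hm hi := by
      apply Subtype.ext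
      show s.1 = m.take (s.1.length - 1 + 1)
      rw [Nat.sub_add_cancel (length_pos _)]
      exact List.prefix_iff_eq_take.mp hst
    have ht : t = pre m hm hj := by
      apply Subtype.ext
      show m = m.take (m.length - 1 + 1)
      rw [Nat.sub_add_cancel (length_pos t), List.take_of_length_le le_rfl]
    refine (hψ l hl).2.2.1 (eps s) (bg ψ s) (bg ψ t) ?_ ?_
    · have key : (bg ψ s, eps s) ∈
          {p | ∃ i : Fin l.length, p = (l.get i, ψ (l.take i) (l.get i))} := by
        rw [hs, eps_pre, bg_pre, ← hAB ψ m hi]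
        exact hmem l hl _ (by rw [hltr, trB_length]; exact hi)
      exact key
    · have key : (bg ψ t, eps s) ∈
          {p | ∃ i : Fin l.length, p = (l.get i, ψ (l.take i) (l.get i))} := by
        rw [heps, ht, eps_pre, bg_pre, ← hAB ψ m hj]
        exact hmem l hl _ (by rw [hltr, trB_length]; exact hj)
      exact key
  -- g ∘ f* = eps
  · intro s
    have hc : (coext (bf ψ) s).1 = trA ψ s.1 := by
      apply List.ext_getElem (by rw [coext_length, trA_length])
      intro i h1 h2
      have h1' : i < s.1.length := by rwa [coext_length] at h1
      rw [coext_getElem _ _ h1', bf_pre ψ s.1 s.2.2 h1',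
        trA_getElem ψ s.1 h1']
    have e : trB ψ (coext (bf ψ) s).1 = s.1 := by rw [hc, trB_trA]
    exact (getLast_congr _ e)
  -- f ∘ g* = eps
  · intro t
    have hc : (coext (bg ψ) t).1 = trB ψ t.1 := by
      apply List.ext_getElem (by rw [coext_length, trB_length])
      intro i h1 h2
      have h1' : i < t.1.length := by rwa [coext_length] at h1
      rw [coext_getElem _ _ h1', bg_pre ψ t.1 t.2.2 h1']
    set l := trB ψ t.1 with hltr
    have hl : l.length ≤ k := by rw [hltr, trB_length]; exact t.2.2
    have hlpos : 0 < l.length := by rw [hltr, trB_length]; exact length_pos t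
    have hj : l.length - 1 < l.length := Nat.sub_lt hlpos one_pos
    have hco : coext (bg ψ) t = pre l hl hj := by
      apply Subtype.ext
      rw [hc]
      show l = l.take (l.length - 1 + 1)
      rw [Nat.sub_add_cancel hlpos, List.take_of_length_le le_rfl]
    rw [hco, bf_pre]
    have ht1 : t.1 = trA ψ l := by rw [hltr, trA_trB]
    have hidx2 : (t.1 : List ℬ.carrier).length - 1 = l.length - 1 := by
      rw [ht1, trA_length]
    rw [eps_eq_getElem]
    rw [getElem_list_congr ht1, getElem_idx_congr hidx2]
    exact (trA_getElem ψ l hj).symm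

end Stmt7Aux

/-- For finite structures, `𝒜 ≅ ℬ` in the coKleisli category of `E_k` via I-morphisms
iff Duplicator has a winning strategy in the `k`-round bijection game. -/
theorem stmt7 (σ : RelVocab) (𝒜 ℬ : RelStruct σ)
    (hA : Finite 𝒜.carrier) (hB : Finite ℬ.carrier) (k : ℕ) (hk : 1 ≤ k) :
    (∃ (f : EkC k 𝒜.carrier → ℬ.carrier) (g : EkC k ℬ.carrier → 𝒜.carrier),
      IsHom (Ek k 𝒜) ℬ f ∧ IsHom (Ek k ℬ) 𝒜 g ∧ IMor f ∧ IMor g ∧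
      (∀ s, g (coext f s) = eps s) ∧ (∀ t, f (coext g t) = eps t)) ↔
    (∃ ψ : List 𝒜.carrier → 𝒜.carrier ≃ ℬ.carrier,
      ∀ l : List 𝒜.carrier, l.length ≤ k →
        IsPIso 𝒜 ℬ {p | ∃ i : Fin l.length, p = (l.get i, ψ (l.take i) (l.get i))}) := by
  constructor
  · rintro ⟨f, g, hf, hg, hIf, hIg, hgf, hfg⟩
    exact ⟨Stmt7Aux.Ψ hk f g hgf hfg,
      fun l hl => Stmt7Aux.forward hk f g hf hg hIf hIg hgf hfg l hl⟩
  · rintro ⟨ψ, hψ⟩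
    obtain ⟨h1, h2, h3, h4, h5, h6⟩ := Stmt7Aux.backward ψ hψ
    exact ⟨Stmt7Aux.bf ψ, Stmt7Aux.bg ψ, h1, h2, h3, h4, h5, h6⟩
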